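/- Let I ≥ 2 and let P = (p_{i,j}) be the I×I matrix with p_{i,i} = 0 for all i and p_{i,j} = 1/(I(I−1)) for all i ≠ j. Then P belongs to the diagonal-effect toric model M1 but P does not belong to the diagonal-effect mixture model M2. -/

import Mathlib

/-- The diagonal-effect toric model `M1`: `I × I` nonnegative matrices summing to `1`
with `p i j = ζʳ i * ζᶜ j` off the diagonal and `p i i = ζʳ i * ζᶜ i * ζᵞ i`
for some nonnegative vectors `ζʳ, ζᶜ, ζᵞ`. -/
def inM1 {I : ℕ} (P : Matrix (Fin I) (Fin I) ℝ) : Prop :=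
  (∀ i j, 0 ≤ P i j) ∧ (∑ i, ∑ j, P i j = 1) ∧
  ∃ zr zc zg : Fin I → ℝ,
    (∀ i, 0 ≤ zr i) ∧ (∀ i, 0 ≤ zc i) ∧ (∀ i, 0 ≤ zg i) ∧
    (∀ i j, i ≠ j → P i j = zr i * zc j) ∧
    (∀ i, P i i = zr i * zc i * zg i)

/-- The diagonal-effect mixture model `M2`: matrices of the form
`α • (r cᵗ entrywise) + (1-α) • diag d` with `r, c, d` nonnegative vectors summing
to `1` and `α ∈ [0,1]`. -/
def inM2 {I : ℕ} (P : Matrix (Fin I) (Fin I) ℝ) : Prop :=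
  ∃ (α : ℝ) (r c d : Fin I → ℝ),
    0 ≤ α ∧ α ≤ 1 ∧
    (∀ i, 0 ≤ r i) ∧ (∀ i, 0 ≤ c i) ∧ (∀ i, 0 ≤ d i) ∧
    (∑ i, r i = 1) ∧ (∑ i, c i = 1) ∧ (∑ i, d i = 1) ∧
    (∀ i j, i ≠ j → P i j = α * r i * c j) ∧
    (∀ i, P i i = α * r i * c i + (1 - α) * d i)

/-- The matrix with zero diagonal and constant off-diagonal entries `1/(I(I-1))`
belongs to `M1` but not to `M2`. -/
theorem zero_diagonal_in_M1_not_M2 {I : ℕ} (hI : 2 ≤ I)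
    (P : Matrix (Fin I) (Fin I) ℝ)
    (hP : ∀ i j, P i j = if i = j then 0 else 1 / (I * (I - 1) : ℝ)) :
    inM1 P ∧ ¬ inM2 P := by
  have hI1 : (1:ℝ) ≤ (I:ℝ) - 1 := by
    have : (2:ℝ) ≤ (I:ℝ) := by exact_mod_cast hI
    linarith
  have hIpos : (0:ℝ) < (I:ℝ) := by linarith
  have hI1pos : (0:ℝ) < (I:ℝ) - 1 := by linarith
  have hcpos : (0:ℝ) < 1 / ((I:ℝ) * ((I:ℝ) - 1)) := by positivity
  have hnonneg : ∀ i j, 0 ≤ P i j := by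
    intro i j; rw [hP]; split
    · exact le_refl 0
    · exact hcpos.le
  constructor
  · refine ⟨hnonneg, ?_, fun _ => 1/(I:ℝ), fun _ => 1/((I:ℝ)-1), fun _ => 0,
      fun _ => by positivity, fun _ => by positivity, fun _ => le_refl 0, ?_, ?_⟩
    · have hrow : ∀ i : Fin I, ∑ j, P i j = (I:ℝ) * (1 / ((I:ℝ) * ((I:ℝ) - 1))) - 1 / ((I:ℝ) * ((I:ℝ) - 1)) := by
        intro i
        have : ∀ j : Fin I, P i j = 1 / ((I:ℝ) * ((I:ℝ) - 1)) - (if i = j then 1 / ((I:ℝ) * ((I:ℝ) - 1)) else 0) := by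
          intro j; rw [hP]; split <;> ring
        rw [Finset.sum_congr rfl (fun j _ => this j), Finset.sum_sub_distrib,
          Finset.sum_const, Finset.sum_ite_eq, if_pos (Finset.mem_univ i)]
        simp [Finset.card_univ]
      rw [Finset.sum_congr rfl (fun i _ => hrow i), Finset.sum_const]
      simp only [Finset.card_univ, Fintype.card_fin, nsmul_eq_mul]
      field_simp
    · intro i j hij
      rw [hP, if_neg (by simpa using hij)]
      rw [div_mul_div_comm, one_mul]
    · intro i
      rw [hP, if_pos rfl]; ring
  · rintro ⟨α, r, c, d, hα0, hα1, hr, hc, hd, hrs, hcs, hds, hoff, hdiag⟩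
    -- pick two distinct indices
    have h2 : ∀ i : Fin I, ∃ j : Fin I, j ≠ i := by
      intro i
      have : 1 < Fintype.card (Fin I) := by simpa using (show 1 < I by omega)
      exact Fintype.exists_ne_of_one_lt_card this i
    -- α * r i * c j > 0 for i ≠ j
    have hpos : ∀ i j : Fin I, i ≠ j → 0 < α * r i * c j := by
      intro i j hij
      have := hoff i j hij
      rw [hP, if_neg hij] at this
      rw [← this]; exact hcpos
    have hαpos : 0 < α := by
      obtain ⟨i⟩ := Fin.pos_iff_nonempty.mp (by omega : 0 < I)
      obtain ⟨j, hj⟩ := h2 i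
      have := hpos i j (Ne.symm hj)
      nlinarith [mul_nonneg (hr i) (hc j)]
    have hrpos : ∀ i, 0 < r i := by
      intro i
      obtain ⟨j, hj⟩ := h2 i
      have := hpos i j (Ne.symm hj)
      nlinarith [mul_nonneg hα0 (hc j)]
    have hcposv : ∀ j, 0 < c j := by
      intro j
      obtain ⟨i, hi⟩ := h2 j
      have := hpos i j hi
      nlinarith [mul_nonneg hα0 (hr i)]
    obtain ⟨i⟩ := Fin.pos_iff_nonempty.mp (by omega : 0 < I)
    have hdi := hdiag i
    rw [hP, if_pos rfl] at hdi
    nlinarith [mul_pos (mul_pos hαpos (hrpos i)) (hcposv i),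
      mul_nonneg (by linarith : (0:ℝ) ≤ 1 - α) (hd i)]
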